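/- For every positive integer p there exists a finite family F of compact convex sets in ℝ² with the (p+1,2) property that cannot be pierced by fewer than ⌊p/2⌋ + 1 lines; namely, the family of the 2p+1 edges (sides) of a regular (2p+1)-gon. -/

import Mathlib

open Real Classical

/-- A line in the plane: the set `{a + t • v : t ∈ ℝ}` for some `v ≠ 0`. -/
def IsLine (ℓ : Set (ℝ × ℝ)) : Prop :=
  ∃ a v : ℝ × ℝ, v ≠ 0 ∧ ℓ = {q | ∃ t : ℝ, q = a + t • v}

/-- The `j`-th vertex of the regular `n`-gon inscribed in the unit circle. -/
noncomputable def gonVertex (n j : ℕ) : ℝ × ℝ :=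
  (Real.cos (2 * π * j / n), Real.sin (2 * π * j / n))

/-- The `j`-th edge of the regular `n`-gon: the closed segment between
consecutive vertices. -/
noncomputable def gonEdge (n j : ℕ) : Set (ℝ × ℝ) :=
  segment ℝ (gonVertex n j) (gonVertex n (j + 1))

/-! ### Auxiliary lemmas -/

/-- If two numbers in `[0, 2π)` differ by an integer multiple of `2π`, they are equal. -/
lemma aux_eq_of_int_mul (s u : ℝ) (k : ℤ) (hs : s ∈ Set.Ico (0:ℝ) (2*π))
    (hu : u ∈ Set.Ico (0:ℝ) (2*π)) (h : u - s = 2 * k * π) : s = u := by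
  have hπ := Real.pi_pos
  have hklt : (k:ℝ) < 1 := by nlinarith [hs.1, hs.2, hu.1, hu.2]
  have hkgt : (-1:ℝ) < k := by nlinarith [hs.1, hs.2, hu.1, hu.2]
  have hk0 : k = 0 := by
    have h1 : k < 1 := by exact_mod_cast hklt
    have h2 : (-1:ℤ) < k := by exact_mod_cast hkgt
    omega
  rw [hk0] at h; push_cast at h; linarith

/-- In any half-open window of length `2π`, the equation
`v.2 * cos t - v.1 * sin t = c` has at most two solutions. -/
lemma aux_three_sols (v : ℝ × ℝ) (hv : v ≠ 0) (c : ℝ) (t1 t2 t3 : ℝ)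
    (h1 : t1 ∈ Set.Ico (0:ℝ) (2*π)) (h2 : t2 ∈ Set.Ico (0:ℝ) (2*π))
    (h3 : t3 ∈ Set.Ico (0:ℝ) (2*π))
    (e1 : v.2 * Real.cos t1 - v.1 * Real.sin t1 = c)
    (e2 : v.2 * Real.cos t2 - v.1 * Real.sin t2 = c)
    (e3 : v.2 * Real.cos t3 - v.1 * Real.sin t3 = c) :
    t1 = t2 ∨ t1 = t3 ∨ t2 = t3 := by
  set z : ℂ := ⟨v.2, v.1⟩ with hz
  have hz0 : z ≠ 0 := by
    simp only [ne_eq, Complex.ext_iff, Complex.zero_re, Complex.zero_im, hz]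
    intro ⟨ha, hb⟩
    exact hv (Prod.ext hb ha)
  have hR : 0 < ‖z‖ := norm_pos_iff.mpr hz0
  set R := ‖z‖ with hRdef
  set φ := Complex.arg z with hφ
  have hcos : Real.cos φ = v.2 / R := Complex.cos_arg hz0
  have hsin : Real.sin φ = v.1 / R := Complex.sin_arg z
  have hg : ∀ t, v.2 * Real.cos t - v.1 * Real.sin t = R * Real.cos (t + φ) := by
    intro t
    rw [Real.cos_add, hcos, hsin]
    field_simp
  have key : ∀ s u : ℝ, s ∈ Set.Ico (0:ℝ) (2*π) → u ∈ Set.Ico (0:ℝ) (2*π) →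
      (v.2 * Real.cos s - v.1 * Real.sin s = c) →
      (v.2 * Real.cos u - v.1 * Real.sin u = c) →
      s = u ∨ ∃ k : ℤ, u = 2 * k * π - s - 2 * φ := by
    intro s u hs hu es eu
    have hcs : Real.cos (s + φ) = Real.cos (u + φ) := by
      have : R * Real.cos (s + φ) = R * Real.cos (u + φ) := by
        rw [← hg, ← hg, es, eu]
      exact mul_left_cancel₀ (ne_of_gt hR) this
    rcases Real.cos_eq_cos_iff.mp hcs with ⟨k, hk | hk⟩
    · exact Or.inl (aux_eq_of_int_mul s u k hs hu (by linarith))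
    · exact Or.inr ⟨k, by linarith⟩
  rcases key t1 t2 h1 h2 e1 e2 with h | ⟨k1, hk1⟩
  · exact Or.inl h
  rcases key t1 t3 h1 h3 e1 e3 with h | ⟨k2, hk2⟩
  · exact Or.inr (Or.inl h)
  refine Or.inr (Or.inr (aux_eq_of_int_mul t2 t3 (k2 - k1) h2 h3 ?_))
  push_cast
  linarith

/-- A line meets at most `4` of the edges of the regular `n`-gon. -/
lemma aux_line_pierce_card (n : ℕ) (hn : 0 < n) (ℓ : Set (ℝ × ℝ)) (hℓ : IsLine ℓ) :
    ((Finset.range n).filter (fun j => (gonEdge n j ∩ ℓ).Nonempty)).card ≤ 4 := by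
  obtain ⟨a, v, hv, rfl⟩ := hℓ
  have hπ := Real.pi_pos
  have hnR : (0:ℝ) < n := by exact_mod_cast hn
  set c : ℝ := v.2 * a.1 - v.1 * a.2 with hc
  set θ : ℕ → ℝ := fun j => 2 * π * j / n with hθdef
  set P : Finset ℕ := (Finset.range n).filter
      (fun j => (gonEdge n j ∩ {q | ∃ t : ℝ, q = a + t • v}).Nonempty) with hP
  have hθmono : ∀ a b : ℕ, θ a ≤ θ b → a ≤ b := by
    intro x y h
    have hx : (x:ℝ) ≤ y := by
      rw [hθdef] at h
      simp only [div_le_div_iff₀ hnR hnR] at h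
      nlinarith [mul_pos hπ hnR]
    exact_mod_cast hx
  have hθle : ∀ x y : ℕ, x ≤ y → θ x ≤ θ y := by
    intro x y h
    have : (x:ℝ) ≤ y := by exact_mod_cast h
    show 2 * π * (x:ℝ) / n ≤ 2 * π * (y:ℝ) / n
    gcongr
  have hθ0 : θ 0 = 0 := by simp [hθdef]
  have hθn : θ n = 2 * π := by rw [hθdef]; field_simp
  -- each pierced edge yields an angle witness
  have hwit : ∀ j : ℕ, ∃ t : ℝ, j ∈ P →
      (θ j ≤ t ∧ t ≤ θ (j+1) ∧ v.2 * Real.cos t - v.1 * Real.sin t = c) := by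
    intro j
    by_cases hj : j ∈ P
    swap
    · exact ⟨0, fun h => absurd h hj⟩
    rw [hP, Finset.mem_filter] at hj
    obtain ⟨q, hqE, hqL⟩ := hj.2
    -- q is on the line, so f q = c
    obtain ⟨s, rfl⟩ := hqL
    have hfq : v.2 * (a + s • v).1 - v.1 * (a + s • v).2 = c := by
      simp only [Prod.fst_add, Prod.snd_add, Prod.smul_fst, Prod.smul_snd, smul_eq_mul]
      rw [hc]; ring
    -- q is on the edge, so c lies between the values at the endpoints
    rw [gonEdge] at hqE
    obtain ⟨u, w, hu, hw, huw, hq⟩ := hqE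
    set A := gonVertex n j with hA
    set B := gonVertex n (j+1) with hB
    have hq1 : (a + s • v).1 = u * A.1 + w * B.1 := by
      rw [← hq]; simp [Prod.fst_add, Prod.smul_fst]
    have hq2 : (a + s • v).2 = u * A.2 + w * B.2 := by
      rw [← hq]; simp [Prod.snd_add, Prod.smul_snd]
    set g : ℝ → ℝ := fun t => v.2 * Real.cos t - v.1 * Real.sin t with hg
    have hgA : v.2 * A.1 - v.1 * A.2 = g (θ j) := by
      simp [hA, gonVertex, hg, hθdef]
    have hgB : v.2 * B.1 - v.1 * B.2 = g (θ (j+1)) := by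
      simp [hB, gonVertex, hg, hθdef]
    have hu1 : u = 1 - w := by linarith
    have hw1 : w ≤ 1 := by linarith
    have hcval : c = (1 - w) * (v.2 * A.1 - v.1 * A.2) + w * (v.2 * B.1 - v.1 * B.2) := by
      rw [← hfq, hq1, hq2, hu1]; ring
    have hcmem : c ∈ Set.uIcc (g (θ j)) (g (θ (j+1))) := by
      rw [← hgA, ← hgB]
      rcases le_total (v.2 * A.1 - v.1 * A.2) (v.2 * B.1 - v.1 * B.2) with h | h
      · rw [Set.uIcc_of_le h, Set.mem_Icc]
        constructor <;>
          nlinarith [mul_nonneg hw (sub_nonneg.mpr h),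
            mul_nonneg (by linarith : (0:ℝ) ≤ 1 - w) (sub_nonneg.mpr h)]
      · rw [Set.uIcc_of_ge h, Set.mem_Icc]
        constructor <;>
          nlinarith [mul_nonneg hw (sub_nonneg.mpr h),
            mul_nonneg (by linarith : (0:ℝ) ≤ 1 - w) (sub_nonneg.mpr h)]
    have hgc : Continuous g :=
      (continuous_const.mul Real.continuous_cos).sub (continuous_const.mul Real.continuous_sin)
    obtain ⟨t, htmem, htval⟩ := intermediate_value_uIcc (hgc.continuousOn) hcmem
    rw [Set.uIcc_of_le (hθle j (j+1) (by omega))] at htmem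
    exact ⟨t, fun _ => ⟨htmem.1, htmem.2, htval⟩⟩
  choose t ht using hwit
  set w' : ℕ → ℝ := fun j => if t j = 2*π then 0 else t j with hw'def
  have hmemIco : ∀ j ∈ P, w' j ∈ Set.Ico (0:ℝ) (2*π) := by
    intro j hj
    obtain ⟨h1, h2, h3⟩ := ht j hj
    have h0 : 0 ≤ t j := le_trans (by rw [← hθ0]; exact hθle 0 j (by omega)) h1
    have hjn : j < n := Finset.mem_range.mp (Finset.mem_filter.mp (hP ▸ hj)).1
    have hub : t j ≤ 2*π := le_trans h2 (by rw [← hθn]; exact hθle _ n (by omega))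
    by_cases hcase : t j = 2*π
    · simp only [hw'def, hcase, if_pos rfl]
      constructor
      · norm_num
      · positivity
    · simp only [hw'def, if_neg hcase]
      exact ⟨h0, lt_of_le_of_ne hub hcase⟩
  have hval : ∀ j ∈ P, v.2 * Real.cos (w' j) - v.1 * Real.sin (w' j) = c := by
    intro j hj
    obtain ⟨h1, h2, h3⟩ := ht j hj
    by_cases hcase : t j = 2*π
    · have h4 : v.2 * Real.cos (2*π) - v.1 * Real.sin (2*π) = c := by rw [← hcase]; exact h3
      simp only [hw'def, hcase, if_pos rfl]
      simpa [Real.cos_two_pi, Real.sin_two_pi] using h4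
    · simp only [hw'def, if_neg hcase]
      exact h3
  have himg : (P.image w').card ≤ 2 := by
    by_contra hcon
    obtain ⟨x, y, z, hx, hy, hz, hxy, hxz, hyz⟩ :=
      Finset.two_lt_card_iff.mp (not_le.mp hcon)
    obtain ⟨jx, hjx, rfl⟩ := Finset.mem_image.mp hx
    obtain ⟨jy, hjy, rfl⟩ := Finset.mem_image.mp hy
    obtain ⟨jz, hjz, rfl⟩ := Finset.mem_image.mp hz
    rcases aux_three_sols v hv c _ _ _ (hmemIco _ hjx) (hmemIco _ hjy) (hmemIco _ hjz)
      (hval _ hjx) (hval _ hjy) (hval _ hjz) with h | h | h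
    · exact hxy h
    · exact hxz h
    · exact hyz h
  have hfib : ∀ s ∈ P.image w', (P.filter (fun x => w' x = s)).card ≤ 2 := by
    intro s _
    by_contra hcon
    obtain ⟨x, y, z, hx, hy, hz, hxy, hxz, hyz⟩ :=
      Finset.two_lt_card_iff.mp (not_le.mp hcon)
    rw [Finset.mem_filter] at hx hy hz
    have hcase : ∀ m, m ∈ P → w' m = s →
        (m = n - 1 ∧ s = 0) ∨ (θ m ≤ s ∧ s ≤ θ (m+1)) := by
      intro m hmP hms
      obtain ⟨h1, h2, h3⟩ := ht m hmP
      have hmn : m < n := Finset.mem_range.mp (Finset.mem_filter.mp (hP ▸ hmP)).1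
      by_cases hcm : t m = 2*π
      · left
        constructor
        · have hnm : n ≤ m + 1 := hθmono n (m+1) (by rw [hθn, ← hcm]; exact h2)
          omega
        · rw [← hms]; simp [hw'def, hcm]
      · right
        have hwm : w' m = t m := by simp [hw'def, hcm]
        rw [← hms, hwm]
        exact ⟨h1, h2⟩
    have hadj : ∀ m1 m2 : ℕ, (θ m1 ≤ s ∧ s ≤ θ (m1+1)) → (θ m2 ≤ s ∧ s ≤ θ (m2+1)) →
        m1 ≤ m2 + 1 := fun m1 m2 ha hb => hθmono _ _ (le_trans ha.1 hb.2)
    have hzero : ∀ m : ℕ, (θ m ≤ s ∧ s ≤ θ (m+1)) → s = 0 → m = 0 := by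
      intro m ha h0
      have : m ≤ 0 := hθmono m 0 (by rw [hθ0, ← h0]; exact ha.1)
      omega
    rcases hcase x hx.1 hx.2 with ⟨hx1, hx2⟩ | hxR <;>
      rcases hcase y hy.1 hy.2 with ⟨hy1, hy2⟩ | hyR <;>
      rcases hcase z hz.1 hz.2 with ⟨hz1, hz2⟩ | hzR
    · omega
    · omega
    · omega
    · have e1 := hzero y hyR hx2
      have e2 := hzero z hzR hx2
      omega
    · omega
    · have e1 := hzero x hxR hy2
      have e2 := hzero z hzR hy2
      omega
    · have e1 := hzero x hxR hz2
      have e2 := hzero y hyR hz2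
      omega
    · have e1 := hadj x y hxR hyR
      have e2 := hadj y x hyR hxR
      have e3 := hadj x z hxR hzR
      have e4 := hadj z x hzR hxR
      have e5 := hadj y z hyR hzR
      have e6 := hadj z y hzR hyR
      omega
  calc P.card ≤ 2 * (P.image w').card := Finset.card_le_mul_card_image P 2 hfib
    _ ≤ 2 * 2 := by omega
    _ = 4 := by norm_num

lemma aux_succ_mod (n x : ℕ) (hx : x < n) : (x+1) % n = if x+1 = n then 0 else x+1 := by
  split
  · rename_i h; rw [h, Nat.mod_self]
  · exact Nat.mod_eq_of_lt (by omega)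

lemma gonVertex_mod (n k : ℕ) (hn : 0 < n) : gonVertex n (k % n) = gonVertex n k := by
  have hnR : (0:ℝ) < n := by exact_mod_cast hn
  have hk : (k:ℝ) = ((k % n : ℕ) : ℝ) + (n:ℝ) * ((k / n : ℕ) : ℝ) := by
    exact_mod_cast (Nat.mod_add_div k n).symm
  have hsplit : 2 * π * (k:ℝ) / n = 2 * π * ((k % n : ℕ):ℝ) / n + ((k / n : ℕ):ℝ) * (2 * π) := by
    rw [hk]; field_simp
  unfold gonVertex
  rw [hsplit]
  have hc := Real.cos_add_nat_mul_two_pi (2 * π * ((k % n : ℕ):ℝ) / n) (k / n)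
  have hs := Real.sin_add_nat_mul_two_pi (2 * π * ((k % n : ℕ):ℝ) / n) (k / n)
  rw [hc, hs]

lemma gonVertex_ne (n a b : ℕ) (hab : a < b) (hlt : b - a < n) :
    gonVertex n a ≠ gonVertex n b := by
  have hn : 0 < n := by omega
  have hnR : (0:ℝ) < n := by exact_mod_cast hn
  have hπ := Real.pi_pos
  intro h
  rw [gonVertex, gonVertex, Prod.ext_iff] at h
  obtain ⟨h1, h2⟩ := h
  set d : ℝ := 2 * π * b / n - 2 * π * a / n with hd
  have hcosd : Real.cos d = 1 := by
    simp only at h1 h2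
    rw [hd, Real.cos_sub, ← h1, ← h2]
    have := Real.sin_sq_add_cos_sq (2 * π * (a:ℝ) / n)
    nlinarith
  have habR : (a:ℝ) < b := by exact_mod_cast hab
  have hdeq : d = 2 * π * ((b:ℝ) - a) / n := by rw [hd]; ring
  have hbanR : (b:ℝ) - a < n := by
    have h1 : ((b - a : ℕ):ℝ) < n := by exact_mod_cast hlt
    rw [Nat.cast_sub (le_of_lt hab)] at h1
    exact h1
  have hdpos : 0 < d := by
    rw [hdeq]
    apply div_pos (by nlinarith) hnR
  have hdlt : d < 2 * π := by
    rw [hdeq, div_lt_iff₀ hnR]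
    nlinarith
  have := (Real.cos_eq_one_iff_of_lt_of_lt (by linarith) (by linarith)).mp hcosd
  linarith

lemma gonVertex_norm (n m : ℕ) : (gonVertex n m).1^2 + (gonVertex n m).2^2 = 1 := by
  have := Real.sin_sq_add_cos_sq (2 * π * (m:ℝ) / n)
  simp only [gonVertex]
  nlinarith

/-- A point of the unit circle distinct from two other points of the circle does not
lie on the chord between them. -/
lemma aux_not_mem_chord (A B C : ℝ × ℝ)
    (hA : A.1^2 + A.2^2 = 1) (hB : B.1^2 + B.2^2 = 1) (hC : C.1^2 + C.2^2 = 1)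
    (hAB : A ≠ B) (hAC : A ≠ C) : A ∉ segment ℝ B C := by
  intro hmem
  obtain ⟨u, w, hu, hw, huw, hq⟩ := hmem
  have h1 : u * B.1 + w * C.1 = A.1 := by
    rw [← hq]; simp [Prod.fst_add, Prod.smul_fst]
  have h2 : u * B.2 + w * C.2 = A.2 := by
    rw [← hq]; simp [Prod.snd_add, Prod.smul_snd]
  by_cases hBCeq : B = C
  · apply hAB
    rw [hBCeq] at h1 h2 ⊢
    have e1 : A.1 = C.1 := by rw [← h1]; linear_combination C.1 * huw
    have e2 : A.2 = C.2 := by rw [← h2]; linear_combination C.2 * huw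
    exact Prod.ext e1 e2
  by_cases hw0 : w = 0
  · apply hAB
    have hu1 : u = 1 := by linarith
    rw [hw0, hu1] at h1 h2
    exact Prod.ext (by linarith) (by linarith)
  by_cases hu0 : u = 0
  · apply hAC
    have hw1 : w = 1 := by linarith
    rw [hu0, hw1] at h1 h2
    exact Prod.ext (by linarith) (by linarith)
  have hu' : 0 < u := lt_of_le_of_ne hu (Ne.symm hu0)
  have hw' : 0 < w := lt_of_le_of_ne hw (Ne.symm hw0)
  have hu1 : u = 1 - w := by linarith
  have hBCpos : 0 < (B.1 - C.1)^2 + (B.2 - C.2)^2 := by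
    have hne : B.1 ≠ C.1 ∨ B.2 ≠ C.2 := by
      by_contra hcc
      push_neg at hcc
      exact hBCeq (Prod.ext hcc.1 hcc.2)
    rcases hne with h | h
    · have h' : B.1 - C.1 ≠ 0 := sub_ne_zero.mpr h
      rcases h'.lt_or_gt with hh | hh <;> nlinarith [sq_nonneg (B.2 - C.2)]
    · have h' : B.2 - C.2 ≠ 0 := sub_ne_zero.mpr h
      rcases h'.lt_or_gt with hh | hh <;> nlinarith [sq_nonneg (B.1 - C.1)]
  have hkey : (1:ℝ) - (A.1^2 + A.2^2) = w * (1-w) * ((B.1 - C.1)^2 + (B.2 - C.2)^2) := by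
    rw [← h1, ← h2, hu1]
    linear_combination (w - 1) * hB - w * hC
  have hpos : (0:ℝ) < w * (1-w) * ((B.1 - C.1)^2 + (B.2 - C.2)^2) :=
    mul_pos (mul_pos hw' (by linarith)) hBCpos
  rw [hA] at hkey
  linarith

/-- **Tightness of Theorem 2**: for every `p ≥ 1`, the family of the `2p+1`
edges of a regular `(2p+1)`-gon has the `(p+1,2)` property, yet it cannot be
pierced by fewer than `⌊p/2⌋ + 1` lines. -/
theorem gon_edges_tight_example (p : ℕ) (hp : 1 ≤ p)
    (F : Finset (Set (ℝ × ℝ)))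
    (hF : F = (Finset.range (2 * p + 1)).image (fun j => gonEdge (2 * p + 1) j)) :
    (∀ G : Finset (Set (ℝ × ℝ)), G ⊆ F → G.card = p + 1 →
      ∃ S ∈ G, ∃ T ∈ G, S ≠ T ∧ (S ∩ T).Nonempty) ∧
    ¬ ∃ L : Finset (Set (ℝ × ℝ)), L.card < p / 2 + 1 ∧ (∀ ℓ ∈ L, IsLine ℓ) ∧
      ∀ S ∈ F, ∃ ℓ ∈ L, (S ∩ ℓ).Nonempty := by
  set n := 2 * p + 1 with hn_def
  have hn : 0 < n := by omega
  have hn3 : 3 ≤ n := by omega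
  constructor
  · -- the (p+1, 2) property
    intro G hG hGcard
    set J := (Finset.range n).filter (fun j => gonEdge n j ∈ G) with hJ
    have hGsub : G ⊆ J.image (fun j => gonEdge n j) := by
      intro S hS
      have hSF := hG hS
      rw [hF] at hSF
      obtain ⟨j, hj, rfl⟩ := Finset.mem_image.mp hSF
      exact Finset.mem_image.mpr ⟨j, Finset.mem_filter.mpr ⟨hj, hS⟩, rfl⟩
    have hJcard : p + 1 ≤ J.card := by
      calc p + 1 = G.card := hGcard.symm
        _ ≤ (J.image (fun j => gonEdge n j)).card := Finset.card_le_card hGsub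
        _ ≤ J.card := Finset.card_image_le
    -- two cyclically adjacent indices belong to J
    have hadj : ∃ j ∈ J, (j+1) % n ∈ J := by
      by_contra hcon
      push_neg at hcon
      set J' := J.image (fun j => (j+1) % n) with hJ'
      have hJsub : J ⊆ Finset.range n := Finset.filter_subset _ _
      have hinj : Set.InjOn (fun j => (j+1) % n) J := by
        intro x hx y hy hxy
        have hxn : x < n := Finset.mem_range.mp (hJsub hx)
        have hyn : y < n := Finset.mem_range.mp (hJsub hy)
        simp only at hxy
        rw [aux_succ_mod n x hxn, aux_succ_mod n y hyn] at hxy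
        split at hxy <;> split at hxy <;> omega
      have hJ'card : J'.card = J.card := Finset.card_image_of_injOn hinj
      have hdisj : Disjoint J J' := by
        rw [Finset.disjoint_right]
        intro m hmJ' hmJ
        obtain ⟨j, hjJ, rfl⟩ := Finset.mem_image.mp hmJ'
        exact hcon j hjJ hmJ
      have hsub : J ∪ J' ⊆ Finset.range n := by
        intro m hm
        rcases Finset.mem_union.mp hm with h | h
        · exact hJsub h
        · obtain ⟨j, hjJ, rfl⟩ := Finset.mem_image.mp h
          exact Finset.mem_range.mpr (Nat.mod_lt _ hn)
      have hcard := Finset.card_le_card hsub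
      rw [Finset.card_union_of_disjoint hdisj, Finset.card_range, hJ'card] at hcard
      omega
    obtain ⟨j, hjJ, hkJ⟩ := hadj
    set k := (j + 1) % n with hk_def
    have hjn : j < n := Finset.mem_range.mp (Finset.filter_subset _ _ hjJ)
    have hvk : gonVertex n k = gonVertex n (j+1) := gonVertex_mod n (j+1) hn
    have hvk1 : gonVertex n (k+1) = gonVertex n (j+2) := by
      have e : (k+1) % n = (j+2) % n := by
        rw [hk_def, Nat.mod_add_mod]
      calc gonVertex n (k+1) = gonVertex n ((k+1) % n) := (gonVertex_mod n (k+1) hn).symm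
        _ = gonVertex n ((j+2) % n) := by rw [e]
        _ = gonVertex n (j+2) := gonVertex_mod n (j+2) hn
    refine ⟨gonEdge n j, (Finset.mem_filter.mp hjJ).2,
      gonEdge n k, (Finset.mem_filter.mp hkJ).2, ?_, ?_⟩
    · -- the two edges are distinct sets
      intro hST
      have hAin : gonVertex n j ∈ gonEdge n k := by
        rw [← hST, gonEdge]
        exact left_mem_segment ℝ _ _
      rw [gonEdge, hvk, hvk1] at hAin
      exact aux_not_mem_chord (gonVertex n j) (gonVertex n (j+1)) (gonVertex n (j+2))
        (gonVertex_norm n j) (gonVertex_norm n (j+1)) (gonVertex_norm n (j+2))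
        (gonVertex_ne n j (j+1) (by omega) (by omega))
        (gonVertex_ne n j (j+2) (by omega) (by omega)) hAin
    · -- the two edges share a vertex
      refine ⟨gonVertex n (j+1), ?_, ?_⟩
      · rw [gonEdge]
        exact right_mem_segment ℝ _ _
      · rw [gonEdge, hvk]
        exact left_mem_segment ℝ _ _
  · -- cannot be pierced by fewer than p/2 + 1 lines
    rintro ⟨L, hLcard, hLlines, hLcover⟩
    have hsub : Finset.range n ⊆
        L.biUnion (fun ℓ => (Finset.range n).filter (fun j => (gonEdge n j ∩ ℓ).Nonempty)) := by
      intro j hj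
      obtain ⟨ℓ, hℓL, hne⟩ := hLcover (gonEdge n j)
        (by rw [hF]; exact Finset.mem_image_of_mem _ hj)
      exact Finset.mem_biUnion.mpr ⟨ℓ, hℓL, Finset.mem_filter.mpr ⟨hj, hne⟩⟩
    have h1 : n ≤ ∑ ℓ ∈ L, ((Finset.range n).filter
        (fun j => (gonEdge n j ∩ ℓ).Nonempty)).card := by
      calc n = (Finset.range n).card := (Finset.card_range n).symm
        _ ≤ (L.biUnion (fun ℓ => (Finset.range n).filter
              (fun j => (gonEdge n j ∩ ℓ).Nonempty))).card := Finset.card_le_card hsub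
        _ ≤ _ := Finset.card_biUnion_le
    have h2 : ∑ ℓ ∈ L, ((Finset.range n).filter
        (fun j => (gonEdge n j ∩ ℓ).Nonempty)).card ≤ ∑ _ℓ ∈ L, 4 :=
      Finset.sum_le_sum (fun ℓ hℓ => aux_line_pierce_card n hn ℓ (hLlines ℓ hℓ))
    rw [Finset.sum_const, smul_eq_mul] at h2
    omega
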